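/- Let G be a connected simple graph that is paw-free and K_3-free and P_4-free. Then G is a complete bipartite graph. -/

import Mathlib

/-- The paw graph: a triangle on vertices 1,2,3 with a pendant vertex 0 adjacent to 1. -/
def pawGraph : SimpleGraph (Fin 4) :=
  SimpleGraph.fromRel (fun i j =>
    (i = 0 ∧ j = 1) ∨ (i = 1 ∧ j = 2) ∨ (i = 2 ∧ j = 3) ∨ (i = 1 ∧ j = 3))

/-- Build an induced `P₄` embedding from four vertices with the right edges/non-edges. -/
lemma p4_embed_aux {V : Type*} (G : SimpleGraph V) (x0 x1 x2 x3 : V)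
    (h01 : G.Adj x0 x1) (h12 : G.Adj x1 x2) (h23 : G.Adj x2 x3)
    (h02 : ¬G.Adj x0 x2) (h03 : ¬G.Adj x0 x3) (h13 : ¬G.Adj x1 x3)
    (d02 : x0 ≠ x2) (d03 : x0 ≠ x3) (d13 : x1 ≠ x3) :
    Nonempty (SimpleGraph.pathGraph 4 ↪g G) := by
  have d01 : x0 ≠ x1 := h01.ne
  have d12 : x1 ≠ x2 := h12.ne
  have d23 : x2 ≠ x3 := h23.ne
  have h20 : ¬G.Adj x2 x0 := fun h => h02 h.symm
  have h30 : ¬G.Adj x3 x0 := fun h => h03 h.symm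
  have h31 : ¬G.Adj x3 x1 := fun h => h13 h.symm
  refine ⟨⟨⟨![x0, x1, x2, x3], ?_⟩, ?_⟩⟩
  · intro i j hij
    fin_cases i <;> fin_cases j <;> revert hij <;>
      simp (config := {decide := true}) [d01, d02, d03, d12, d13, d23,
        d01.symm, d02.symm, d03.symm, d12.symm, d13.symm, d23.symm]
  · intro i j
    change G.Adj (![x0, x1, x2, x3] i) (![x0, x1, x2, x3] j) ↔ _
    fin_cases i <;> fin_cases j <;>
      simp (config := {decide := true}) [SimpleGraph.pathGraph_adj, h01, h12, h23,
        h01.symm, h12.symm, h23.symm, h02, h03, h13, h20, h30, h31]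

theorem completeBipartite_of_paw_free_K3_free_P4_free {V : Type*} [Fintype V]
    (G : SimpleGraph V) (hconn : G.Connected)
    (hpaw : ¬ Nonempty (pawGraph ↪g G))
    (hK3 : ¬ Nonempty ((⊤ : SimpleGraph (Fin 3)) ↪g G))
    (hP4 : ¬ Nonempty (SimpleGraph.pathGraph 4 ↪g G)) :
    ∃ m n : ℕ, Nonempty (G ≃g completeBipartiteGraph (Fin m) (Fin n)) := by
  classical
  obtain ⟨v⟩ := hconn.nonempty
  have cf : G.CliqueFree 3 := by
    rw [SimpleGraph.cliqueFree_iff]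
    exact not_nonempty_iff.mp (fun ⟨c⟩ => hK3 ⟨c.topEmbedding⟩)
  have tri : ∀ x y z : V, G.Adj x y → G.Adj x z → G.Adj y z → False := by
    intro x y z h1 h2 h3
    exact cf {x, y, z} (SimpleGraph.is3Clique_triple_iff.mpr ⟨h1, h2, h3⟩)
  -- every vertex is at distance ≤ 2 from v
  have L0 : ∀ ⦃u z : V⦄, G.Walk u z → (u = z ∨ G.Adj z u ∨ ∃ a, G.Adj z a ∧ G.Adj a u) := by
    intro u z w
    induction w with
    | nil => exact Or.inl rfl
    | @cons u x v hux _ ih =>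
      rcases ih with rfl | hvx | ⟨a, hva, hax⟩
      · exact Or.inr (Or.inl hux.symm)
      · by_cases huv : u = v
        · exact Or.inl huv
        · by_cases hvu : G.Adj v u
          · exact Or.inr (Or.inl hvu)
          · exact Or.inr (Or.inr ⟨x, hvx, hux.symm⟩)
      · by_cases huv : u = v
        · exact Or.inl huv
        · by_cases hvu : G.Adj v u
          · exact Or.inr (Or.inl hvu)
          · by_cases hvx : G.Adj v x
            · exact Or.inr (Or.inr ⟨x, hvx, hux.symm⟩)
            · -- x is at distance 2; if u is not adjacent to a we get an induced P4 v-a-x-u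
              by_cases hau : G.Adj a u
              · exact Or.inr (Or.inr ⟨a, hva, hau⟩)
              · exfalso
                apply hP4
                refine p4_embed_aux G v a x u hva hax hux.symm hvx hvu hau ?_ ?_ ?_
                · exact fun h => hvu (h.symm ▸ hux.symm)
                · exact fun h => huv h.symm
                · exact fun h => hvu (h ▸ hva)
  have L : ∀ u, u = v ∨ G.Adj v u ∨ ∃ a, G.Adj v a ∧ G.Adj a u := by
    intro u
    obtain ⟨w⟩ := hconn.preconnected u v
    exact L0 w
  -- every vertex at distance 2 from v is adjacent to all neighbors of v
  have claim2 : ∀ b a, G.Adj v a → G.Adj a b → ¬G.Adj v b →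
      ∀ a', G.Adj v a' → G.Adj b a' := by
    intro b a hva hab hvb a' hva'
    by_cases hbv : b = v
    · exact hbv ▸ hva'
    by_contra hba'
    by_cases haa' : a = a'
    · exact hba' (haa' ▸ hab.symm)
    · apply hP4
      refine p4_embed_aux G b a v a' hab.symm hva.symm hva' ?_ hba' ?_ hbv ?_ haa'
      · exact fun h => hvb h.symm
      · exact fun h => tri v a a' hva hva' h
      · exact fun h => hvb (h.symm ▸ hva')
  -- adjacency characterization: edges are exactly between N(v) and its complement
  have key : ∀ x y, G.Adj x y ↔
      ((G.Adj v x ∧ ¬G.Adj v y) ∨ (¬G.Adj v x ∧ G.Adj v y)) := by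
    intro x y
    constructor
    · intro hxy
      by_cases hvx : G.Adj v x <;> by_cases hvy : G.Adj v y
      · exact (tri v x y hvx hvy hxy).elim
      · exact Or.inl ⟨hvx, hvy⟩
      · exact Or.inr ⟨hvx, hvy⟩
      · exfalso
        have hx : x ≠ v := fun h => hvy (h ▸ hxy)
        have hy : y ≠ v := fun h => hvx (h ▸ hxy.symm)
        rcases L x with rfl | h | ⟨a, hva, hax⟩
        · exact hx rfl
        · exact hvx h
        · have hya : G.Adj y a := by
            rcases L y with rfl | h | ⟨a', hva', ha'y⟩
            · exact absurd rfl hy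
            · exact absurd h hvy
            · exact claim2 y a' hva' ha'y hvy a hva
          have hxa : G.Adj x a := claim2 x a hva hax hvx a hva
          exact tri a x y hxa.symm hya.symm hxy
    · rintro (⟨hvx, hvy⟩ | ⟨hvx, hvy⟩)
      · by_cases hy : y = v
        · subst hy; exact hvx.symm
        · rcases L y with rfl | h | ⟨a, hva, hay⟩
          · exact absurd rfl hy
          · exact absurd h hvy
          · exact (claim2 y a hva hay hvy x hvx).symm
      · by_cases hx : x = v
        · subst hx; exact hvy
        · rcases L x with rfl | h | ⟨a, hva, hax⟩
          · exact absurd rfl hx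
          · exact absurd h hvx
          · exact claim2 x a hva hax hvx y hvy
  refine ⟨Fintype.card {x // G.Adj v x}, Fintype.card {x // ¬G.Adj v x}, ⟨?_⟩⟩
  refine ⟨(Equiv.sumCompl (G.Adj v)).symm.trans
    (Equiv.sumCongr (Fintype.equivFin _) (Fintype.equivFin _)), ?_⟩
  intro x y
  by_cases hx : G.Adj v x <;> by_cases hy : G.Adj v y <;>
    simp [key x y, hx, hy, Equiv.sumCompl_symm_apply_of_pos,
      Equiv.sumCompl_symm_apply_of_neg]
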